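/- Let θ : ℕ → ℝ be positive and nondecreasing with n²/θ_n → c as n → ∞ for some constant c > 0 (Case C2). For each n, let (C_1^n,…,C_n^n) be distributed according to the Ewens sampling formula with parameters n and θ_n. Then P(∑_{j=3}^n C_j^n = 0) → 1, and for every nonnegative integer k, P(C_1^n = n−2k and C_2^n = k) → e^{−c/2}·(c/2)^k/k! as n → ∞; consequently (C_1^n − n, C_2^n) converges in distribution to (−2P_{c/2}, P_{c/2}), where P_{c/2} is Poisson with mean c/2. -/

import Mathlib

open MeasureTheory Filter

section Aux
open Finset

section Analytic
variable (θ : ℕ → ℝ) (hpos : ∀ n, 0 < θ n) (c : ℝ) (hc : 0 < c)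
  (hC2 : Tendsto (fun n : ℕ => (n : ℝ) ^ 2 / θ n) atTop (nhds c))

include hpos hC2 in
lemma aux_n_div : Tendsto (fun n : ℕ => (n : ℝ) / θ n) atTop (nhds 0) := by
  have h := hC2.mul tendsto_one_div_atTop_nhds_zero_nat
  rw [mul_zero] at h
  refine h.congr (fun n => ?_)
  rcases Nat.eq_zero_or_pos n with h0 | h0
  · simp [h0]
  · have : (n : ℝ) ≠ 0 := Nat.cast_ne_zero.2 h0.ne'
    field_simp

include hpos hC2 in
lemma aux_one_div : Tendsto (fun n : ℕ => 1 / θ n) atTop (nhds 0) := by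
  have h := (aux_n_div θ hpos c hC2).mul tendsto_one_div_atTop_nhds_zero_nat
  rw [mul_zero] at h
  refine h.congr' ?_
  filter_upwards [eventually_ge_atTop 1] with n hn
  have : (n : ℝ) ≠ 0 := Nat.cast_ne_zero.2 (by omega)
  rw [div_mul_div_comm, mul_one, mul_comm (θ n), div_mul_eq_div_div, div_self this]

include hpos hC2 in
lemma aux_cube : Tendsto (fun n : ℕ => (n : ℝ) ^ 3 / (θ n) ^ 2) atTop (nhds 0) := by
  have h := (hC2.mul hC2).mul tendsto_one_div_atTop_nhds_zero_nat
  rw [mul_zero] at h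
  refine h.congr' ?_
  filter_upwards [eventually_ge_atTop 1] with n hn
  have hn0 : (n : ℝ) ≠ 0 := Nat.cast_ne_zero.2 (by omega)
  have hθ : θ n ≠ 0 := (hpos n).ne'
  field_simp

set_option linter.unusedSectionVars false

include hpos hC2 in
lemma aux_sumlog :
    Tendsto (fun n : ℕ => ∑ i ∈ range n, Real.log (1 + (i : ℝ) / θ n)) atTop
      (nhds (c / 2)) := by
  have hsum : ∀ n : ℕ, (∑ i ∈ range n, (i : ℝ)) = ((n : ℝ) ^ 2 - n) / 2 := by
    intro n
    induction n with
    | zero => simp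
    | succ m ih => rw [Finset.sum_range_succ, ih]; push_cast; ring
  have hupper : Tendsto (fun n : ℕ => ∑ i ∈ range n, (i : ℝ) / θ n) atTop
      (nhds (c / 2)) := by
    have h := (hC2.sub (aux_n_div θ hpos c hC2)).div_const 2
    rw [sub_zero] at h
    refine h.congr (fun n => ?_)
    rw [← Finset.sum_div, hsum]
    ring
  have hlower : Tendsto
      (fun n : ℕ => (∑ i ∈ range n, (i : ℝ) / θ n) - (n : ℝ) ^ 3 / (θ n) ^ 2) atTop
      (nhds (c / 2)) := by
    have h := hupper.sub (aux_cube θ hpos c hC2)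
    rwa [sub_zero] at h
  refine tendsto_of_tendsto_of_tendsto_of_le_of_le hlower hupper (fun n => ?_) (fun n => ?_)
  · -- lower bound
    have hθ := hpos n
    have hterm : ∀ i ∈ range n, (i : ℝ) / θ n - ((i : ℝ) / θ n) ^ 2 ≤
        Real.log (1 + (i : ℝ) / θ n) := by
      intro i _
      set x : ℝ := (i : ℝ) / θ n with hx
      have hx0 : 0 ≤ x := by positivity
      have h1x : (0:ℝ) < 1 + x := by linarith
      have hlog := Real.one_sub_inv_le_log_of_pos h1x
      have heq : 1 - (1 + x)⁻¹ = x / (1 + x) := by field_simp; ring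
      have : x - x ^ 2 ≤ x / (1 + x) := by
        rw [le_div_iff₀ h1x]
        nlinarith [pow_nonneg hx0 3]
      linarith [heq ▸ hlog]
    have hsq : ∑ i ∈ range n, ((i : ℝ) / θ n) ^ 2 ≤ (n : ℝ) ^ 3 / (θ n) ^ 2 := by
      calc ∑ i ∈ range n, ((i : ℝ) / θ n) ^ 2
          ≤ ∑ _i ∈ range n, (n : ℝ) ^ 2 / (θ n) ^ 2 := by
            refine Finset.sum_le_sum (fun i hi => ?_)
            rw [div_pow]
            have h1 : (i:ℝ) ≤ n := by exact_mod_cast (Finset.mem_range.1 hi).le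
            have h2 : (0:ℝ) ≤ (i:ℝ) := Nat.cast_nonneg i
            gcongr
        _ = (n : ℝ) * ((n : ℝ) ^ 2 / (θ n) ^ 2) := by
            rw [Finset.sum_const, card_range, nsmul_eq_mul]
        _ = (n : ℝ) ^ 3 / (θ n) ^ 2 := by ring
    have := Finset.sum_le_sum hterm
    rw [Finset.sum_sub_distrib] at this
    linarith
  · -- upper bound
    refine Finset.sum_le_sum (fun i _ => ?_)
    have hθ := hpos n
    have h1x : (0:ℝ) < 1 + (i : ℝ) / θ n := by positivity
    have := Real.log_le_sub_one_of_pos h1x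
    linarith

include hpos hC2 in
lemma aux_prod :
    Tendsto (fun n : ℕ => ∏ i ∈ range n, θ n / (θ n + i)) atTop
      (nhds (Real.exp (-(c / 2)))) := by
  have h := (Real.continuous_exp.tendsto _).comp (aux_sumlog θ hpos c hC2).neg
  refine h.congr (fun n => ?_)
  simp only [Function.comp]
  rw [← Finset.sum_neg_distrib, Real.exp_sum]
  refine Finset.prod_congr rfl (fun i _ => ?_)
  have hθ := hpos n
  have h1x : (0:ℝ) < 1 + (i : ℝ) / θ n := by positivity
  rw [Real.exp_neg, Real.exp_log h1x]
  rw [show (1 : ℝ) + (i : ℝ) / θ n = (θ n + i) / θ n by field_simp]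
  rw [inv_div]

include hpos hC2 in
lemma aux_factor (k : ℕ) :
    Tendsto (fun n : ℕ => ((n : ℝ) - 2*k) * ((n : ℝ) - 2*k - 1) / θ n) atTop (nhds c) := by
  have h := (hC2.sub ((aux_n_div θ hpos c hC2).const_mul (4*(k:ℝ)+1))).add
    ((aux_one_div θ hpos c hC2).const_mul ((2*(k:ℝ))*(2*(k:ℝ)+1)))
  rw [mul_zero, mul_zero, sub_zero, add_zero] at h
  refine h.congr (fun n => ?_)
  have hθ : θ n ≠ 0 := (hpos n).ne'
  field_simp
  ring

include hpos hC2 in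
lemma aux_main (k : ℕ) :
    Tendsto (fun n : ℕ =>
      (Nat.factorial n : ℝ) / (∏ i ∈ range n, (θ n + i)) *
        ((θ n) ^ (n - 2*k) / (Nat.factorial (n - 2*k)) *
          ((θ n / 2) ^ k / (Nat.factorial k))))
      atTop (nhds (Real.exp (-(c/2)) * (c/2) ^ k / (Nat.factorial k))) := by
  induction k with
  | zero =>
    have h := aux_prod θ hpos c hC2
    simp only [pow_zero, Nat.factorial_zero, Nat.cast_one, mul_one, Nat.sub_zero, div_one]
    refine h.congr (fun n => ?_)
    have hθ : θ n ≠ 0 := (hpos n).ne'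
    have hprod : (∏ i ∈ range n, (θ n + i)) ≠ 0 :=
      (Finset.prod_pos (fun i _ => by have := hpos n; positivity)).ne'
    have hfac : ((Nat.factorial n : ℝ)) ≠ 0 := Nat.cast_ne_zero.2 (Nat.factorial_ne_zero n)
    rw [Finset.prod_div_distrib, Finset.prod_const, card_range]
    field_simp
    simp only [Nat.sub_zero, mul_zero]
    ring
  | succ k ih =>
    have h := (ih.mul (aux_factor θ hpos c hC2 k)).div_const (2*(k+1))
    have hRHS : Real.exp (-(c/2)) * (c/2) ^ k / (Nat.factorial k) * c / (2*(k+1)) =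
        Real.exp (-(c/2)) * (c/2) ^ (k+1) / (Nat.factorial (k+1)) := by
      rw [Nat.factorial_succ]
      have hfk : ((Nat.factorial k : ℝ)) ≠ 0 := Nat.cast_ne_zero.2 (Nat.factorial_ne_zero k)
      have hk1 : ((k:ℝ) + 1) ≠ 0 := by positivity
      push_cast
      field_simp
      ring
    rw [hRHS] at h
    refine h.congr' ?_
    filter_upwards [eventually_ge_atTop (2*k+2)] with n hn
    obtain ⟨p, hp⟩ : ∃ p, n = p + 2 + 2*k := ⟨n - 2*k - 2, by omega⟩
    subst hp
    have e1 : p + 2 + 2*k - 2*(k+1) = p := by omega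
    have e2 : p + 2 + 2*k - 2*k = p + 2 := by omega
    rw [e1, e2]
    set T := θ (p + 2 + 2*k) with hT
    have hθ : (0:ℝ) < T := hpos _
    have hθ0 : T ≠ 0 := hθ.ne'
    have hprod : (∏ i ∈ range (p + 2 + 2*k), (T + i)) ≠ 0 :=
      (Finset.prod_pos (fun i _ => by positivity)).ne'
    have hf1 : ((Nat.factorial (p+2) : ℝ)) = ((p:ℝ)+2) * ((p:ℝ)+1) * (Nat.factorial p) := by
      rw [show p + 2 = (p+1)+1 from rfl, Nat.factorial_succ, Nat.factorial_succ]
      push_cast; ring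
    have hf2 : ((Nat.factorial (p+2) : ℝ)) ≠ 0 := Nat.cast_ne_zero.2 (Nat.factorial_ne_zero _)
    have hfp : ((Nat.factorial p : ℝ)) ≠ 0 := Nat.cast_ne_zero.2 (Nat.factorial_ne_zero _)
    have hfk : ((Nat.factorial k : ℝ)) ≠ 0 := Nat.cast_ne_zero.2 (Nat.factorial_ne_zero k)
    have hfk1 : ((Nat.factorial (k+1) : ℝ)) ≠ 0 := Nat.cast_ne_zero.2 (Nat.factorial_ne_zero _)
    have hfk1' : ((Nat.factorial (k+1) : ℝ)) = ((k:ℝ)+1) * (Nat.factorial k) := by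
      rw [Nat.factorial_succ]; push_cast; ring
    have hpow : T ^ (p + 2) = T ^ p * T * T := by ring
    rw [hfk1', hf1, hpow]
    push_cast
    field_simp
    ring

end Analytic

theorem stmt_17 (θ : ℕ → ℝ) (hpos : ∀ n, 0 < θ n) (hmono : Monotone θ)
    (c : ℝ) (hc : 0 < c)
    (hC2 : Tendsto (fun n : ℕ => (n : ℝ) ^ 2 / θ n) atTop (nhds c))
    (Ω : ℕ → Type*) [∀ n, MeasurableSpace (Ω n)]
    (P : ∀ n, Measure (Ω n)) [∀ n, IsProbabilityMeasure (P n)]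
    (C : ∀ n, ℕ → Ω n → ℕ)
    (hmeas : ∀ n j, Measurable (C n j))
    (hlaw : ∀ n, 1 ≤ n → ∀ a : ℕ → ℕ,
      (P n) {ω | ∀ j ∈ Finset.Icc 1 n, C n j ω = a j} =
        ENNReal.ofReal
          (if ∑ j ∈ Finset.Icc 1 n, j * a j = n then
            (Nat.factorial n : ℝ) / (∏ i ∈ Finset.range n, (θ n + i)) *
              ∏ j ∈ Finset.Icc 1 n, (θ n / j) ^ (a j) / (Nat.factorial (a j))
          else 0)) :
    Tendsto (fun n : ℕ =>
        ((P n) {ω | ∑ j ∈ Finset.Icc 3 n, C n j ω = 0}).toReal) atTop (nhds 1) ∧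
    ∀ k : ℕ, Tendsto (fun n : ℕ =>
        ((P n) {ω | C n 1 ω = n - 2 * k ∧ C n 2 ω = k}).toReal) atTop
      (nhds (Real.exp (-c / 2) * (c / 2) ^ k / (Nat.factorial k))) := by
  classical
  set π : ℕ → ℝ := fun k => Real.exp (-c / 2) * (c / 2) ^ k / (Nat.factorial k) with hπ
  have hπeq : ∀ k, π k = Real.exp (-(c/2)) * (c/2) ^ k / (Nat.factorial k) := by
    intro k; rw [hπ]; norm_num [neg_div]
  set a : ℕ → ℕ → ℕ → ℕ := fun n k j => if j = 1 then n - 2*k else if j = 2 then k else 0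
    with ha
  set A : (n : ℕ) → ℕ → Set (Ω n) :=
    fun n k => {ω | ∀ j ∈ Finset.Icc 1 n, C n j ω = a n k j} with hA
  set F : ℕ → ℕ → ℝ := fun n k =>
    (Nat.factorial n : ℝ) / (∏ i ∈ Finset.range n, (θ n + i)) *
      ((θ n) ^ (n - 2*k) / (Nat.factorial (n - 2*k)) *
        ((θ n / 2) ^ k / (Nat.factorial k))) with hF
  have hAmeas : ∀ n k, MeasurableSet (A n k) := by
    intro n k
    have : A n k = ⋂ j ∈ Finset.Icc 1 n, (C n j) ⁻¹' {a n k j} := by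
      ext ω; simp [hA, Set.mem_iInter]
    rw [this]
    exact Finset.measurableSet_biInter _ (fun j _ => hmeas n j (measurableSet_singleton _))
  have hFnonneg : ∀ n k, 0 ≤ F n k := by
    intro n k
    have hθ := hpos n
    have hprod : 0 < ∏ i ∈ Finset.range n, (θ n + i) :=
      Finset.prod_pos (fun i _ => by positivity)
    rw [hF]
    positivity
  have hsub12 : ∀ n, 2 ≤ n → ({1, 2} : Finset ℕ) ⊆ Finset.Icc 1 n := by
    intro n hn x hx
    simp only [Finset.mem_insert, Finset.mem_singleton] at hx
    simp only [Finset.mem_Icc]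
    omega
  have hAval : ∀ k n, 2*k + 2 ≤ n → (P n) (A n k) = ENNReal.ofReal (F n k) := by
    intro k n hn
    rw [hA]
    rw [hlaw n (by omega) (a n k)]
    have hsumeq : ∑ j ∈ Finset.Icc 1 n, j * a n k j = n := by
      rw [← Finset.sum_subset (hsub12 n (by omega)) ?_]
      · rw [Finset.sum_pair (by norm_num : (1:ℕ) ≠ 2)]
        simp only [ha]
        norm_num
        omega
      · intro x hx hx'
        simp only [Finset.mem_insert, Finset.mem_singleton, not_or] at hx'
        simp [ha, hx'.1, hx'.2]
    rw [if_pos hsumeq]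
    congr 1
    have hprodeq : ∏ j ∈ Finset.Icc 1 n, (θ n / j) ^ (a n k j) / (Nat.factorial (a n k j)) =
        (θ n) ^ (n - 2*k) / (Nat.factorial (n - 2*k)) * ((θ n / 2) ^ k / (Nat.factorial k)) := by
      rw [← Finset.prod_subset (hsub12 n (by omega)) ?_]
      · rw [Finset.prod_pair (by norm_num : (1:ℕ) ≠ 2)]
        simp [ha]
      · intro x hx hx'
        simp only [Finset.mem_insert, Finset.mem_singleton, not_or] at hx'
        simp [ha, hx'.1, hx'.2]
    rw [hprodeq, hF]
  have hq : ∀ k n, 2*k + 2 ≤ n → ((P n) (A n k)).toReal = F n k := by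
    intro k n hn
    rw [hAval k n hn, ENNReal.toReal_ofReal (hFnonneg n k)]
  have hqlim : ∀ k, Tendsto (fun n => ((P n) (A n k)).toReal) atTop (nhds (π k)) := by
    intro k
    rw [hπeq]
    refine (aux_main θ hpos c hC2 k).congr' ?_
    filter_upwards [eventually_ge_atTop (2*k+2)] with n hn
    exact (hq k n hn).symm
  have hdisj : ∀ n, 2 ≤ n → ∀ k k', k ≠ k' → Disjoint (A n k) (A n k') := by
    intro n hn k k' hkk
    rw [Set.disjoint_left]
    intro ω h1 h2
    have h2mem : (2:ℕ) ∈ Finset.Icc 1 n := by simp only [Finset.mem_Icc]; omega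
    have e1 := h1 2 h2mem
    have e2 := h2 2 h2mem
    simp only [ha] at e1 e2
    norm_num at e1 e2
    exact hkk (e1 ▸ e2)
  have hsubB : ∀ n k, 2 ≤ n → A n k ⊆ {ω | C n 1 ω = n - 2*k ∧ C n 2 ω = k} := by
    intro n k hn ω hω
    have h1mem : (1:ℕ) ∈ Finset.Icc 1 n := by simp only [Finset.mem_Icc]; omega
    have h2mem : (2:ℕ) ∈ Finset.Icc 1 n := by simp only [Finset.mem_Icc]; omega
    have e1 := hω 1 h1mem
    have e2 := hω 2 h2mem
    simp only [ha] at e1 e2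
    norm_num at e1 e2
    exact ⟨e1, e2⟩
  have hsubE : ∀ n k, A n k ⊆ {ω | ∑ j ∈ Finset.Icc 3 n, C n j ω = 0} := by
    intro n k ω hω
    simp only [Set.mem_setOf_eq]
    refine Finset.sum_eq_zero (fun j hj => ?_)
    simp only [Finset.mem_Icc] at hj
    have hj1 : j ∈ Finset.Icc 1 n := by simp only [Finset.mem_Icc]; omega
    have := hω j hj1
    rw [this]
    simp only [ha]
    rw [if_neg (by omega), if_neg (by omega)]
  have htoReal_le : ∀ n (s t : Set (Ω n)), s ⊆ t →
      ((P n) s).toReal ≤ ((P n) t).toReal := by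
    intro n s t h
    exact ENNReal.toReal_mono (measure_ne_top _ _) (measure_mono h)
  have hle1 : ∀ n (s : Set (Ω n)), ((P n) s).toReal ≤ 1 := by
    intro n s
    have h := htoReal_le n s Set.univ (Set.subset_univ s)
    rwa [measure_univ, ENNReal.toReal_one] at h
  have hsumA : ∀ n K, 2 ≤ n → (∑ k ∈ Finset.range K, ((P n) (A n k)).toReal) =
      ((P n) (⋃ k ∈ Finset.range K, A n k)).toReal := by
    intro n K hn
    rw [measure_biUnion_finset (fun k _ k' _ hne => hdisj n hn k k' hne)
      (fun k _ => hAmeas n k)]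
    rw [ENNReal.toReal_sum (fun k _ => measure_ne_top _ _)]
  have hhs : HasSum π 1 := by
    have h := NormedSpace.expSeries_div_hasSum_exp (c/2)
    rw [← Real.exp_eq_exp_ℝ] at h
    have h2 := h.mul_left (Real.exp (-(c/2)))
    rw [← Real.exp_add, neg_add_cancel, Real.exp_zero] at h2
    have hfe : π = fun k : ℕ => Real.exp (-(c/2)) * ((c/2) ^ k / (Nat.factorial k)) := by
      funext k
      rw [hπeq k]
      ring
    rw [hfe]
    exact h2
  have hπpartial : Tendsto (fun K => ∑ k ∈ Finset.range K, π k) atTop (nhds 1) :=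
    hhs.tendsto_sum_nat
  have part1 : Tendsto (fun n : ℕ =>
      ((P n) {ω | ∑ j ∈ Finset.Icc 3 n, C n j ω = 0}).toReal) atTop (nhds 1) := by
    rw [Metric.tendsto_atTop]
    intro ε hε
    obtain ⟨K, hK⟩ := Metric.tendsto_atTop.1 hπpartial (ε/2) (by linarith)
    have hKval : 1 - ε/2 < ∑ k ∈ Finset.range K, π k := by
      have := hK K le_rfl
      rw [Real.dist_eq, abs_lt] at this
      linarith
    have hsum_tend : Tendsto (fun n => ∑ k ∈ Finset.range K, ((P n) (A n k)).toReal) atTop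
        (nhds (∑ k ∈ Finset.range K, π k)) :=
      tendsto_finset_sum _ (fun k _ => hqlim k)
    obtain ⟨N, hN⟩ := Metric.tendsto_atTop.1 hsum_tend (ε/2) (by linarith)
    refine ⟨max N 2, fun n hn => ?_⟩
    have hn2 : 2 ≤ n := le_trans (le_max_right _ _) hn
    have hNn := hN n (le_trans (le_max_left _ _) hn)
    rw [Real.dist_eq, abs_lt] at hNn
    have hlow : ∑ k ∈ Finset.range K, ((P n) (A n k)).toReal ≤
        ((P n) {ω | ∑ j ∈ Finset.Icc 3 n, C n j ω = 0}).toReal := by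
      rw [hsumA n K hn2]
      exact htoReal_le n _ _ (Set.iUnion₂_subset fun k _ => hsubE n k)
    have hup := hle1 n {ω | ∑ j ∈ Finset.Icc 3 n, C n j ω = 0}
    rw [Real.dist_eq, abs_lt]
    constructor <;> [linarith; linarith]
  refine ⟨part1, fun k => ?_⟩
  rw [Metric.tendsto_atTop]
  intro ε hε
  obtain ⟨K0, hK0⟩ := Metric.tendsto_atTop.1 hπpartial (ε/4) (by linarith)
  set K := max K0 (k+1) with hKdef
  have hKval : 1 - ε/4 < ∑ k' ∈ Finset.range K, π k' := by
    have := hK0 K (le_max_left _ _)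
    rw [Real.dist_eq, abs_lt] at this
    linarith
  have hkK : k ∈ Finset.range K := Finset.mem_range.2 (lt_of_lt_of_le (Nat.lt_succ_self k)
    (le_max_right _ _))
  have hsum_tend : Tendsto (fun n => ∑ k' ∈ Finset.range K, ((P n) (A n k')).toReal) atTop
      (nhds (∑ k' ∈ Finset.range K, π k')) :=
    tendsto_finset_sum _ (fun k' _ => hqlim k')
  obtain ⟨N1, hN1⟩ := Metric.tendsto_atTop.1 hsum_tend (ε/4) (by linarith)
  obtain ⟨N2, hN2⟩ := Metric.tendsto_atTop.1 (hqlim k) (ε/4) (by linarith)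
  refine ⟨max (max N1 N2) 2, fun n hn => ?_⟩
  have hn2 : 2 ≤ n := le_trans (le_max_right _ _) hn
  have hn1 : N1 ≤ n := le_trans (le_trans (le_max_left _ _) (le_max_left _ _)) hn
  have hn2' : N2 ≤ n := le_trans (le_trans (le_max_right _ _) (le_max_left _ _)) hn
  have hN1n := hN1 n hn1
  have hN2n := hN2 n hn2'
  rw [Real.dist_eq, abs_lt] at hN1n hN2n
  set B : Set (Ω n) := {ω | C n 1 ω = n - 2 * k ∧ C n 2 ω = k} with hB
  have hBdisj : Disjoint B (⋃ k' ∈ (Finset.range K).erase k, A n k') := by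
    rw [Set.disjoint_left]
    intro ω hωB hωU
    simp only [Set.mem_iUnion] at hωU
    obtain ⟨k', hk', hωA⟩ := hωU
    have hkk' : k' ≠ k := Finset.ne_of_mem_erase hk'
    have h2mem : (2:ℕ) ∈ Finset.Icc 1 n := by simp only [Finset.mem_Icc]; omega
    have e2 := hωA 2 h2mem
    simp only [ha] at e2
    norm_num at e2
    have := hωB.2
    rw [hB] at hωB
    exact hkk' (by rw [← e2, hωB.2])
  have hUmeas : MeasurableSet (⋃ k' ∈ (Finset.range K).erase k, A n k') :=
    Finset.measurableSet_biUnion _ (fun k' _ => hAmeas n k')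
  have key : (P n) B + ∑ k' ∈ (Finset.range K).erase k, (P n) (A n k') ≤ 1 := by
    rw [← measure_biUnion_finset
      (fun x hx y hy hne => hdisj n hn2 x y hne) (fun k' _ => hAmeas n k'),
      ← measure_union hBdisj hUmeas]
    exact prob_le_one
  have keyR : ((P n) B).toReal + ∑ k' ∈ (Finset.range K).erase k, ((P n) (A n k')).toReal
      ≤ 1 := by
    have h := ENNReal.toReal_mono ENNReal.one_ne_top key
    rwa [ENNReal.toReal_add (measure_ne_top _ _)
      (by
        refine (lt_of_le_of_lt ?_ ENNReal.one_lt_top).ne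
        calc ∑ k' ∈ (Finset.range K).erase k, (P n) (A n k')
            ≤ (P n) B + ∑ k' ∈ (Finset.range K).erase k, (P n) (A n k') := le_add_self
          _ ≤ 1 := key),
      ENNReal.toReal_sum (fun k' _ => measure_ne_top _ _), ENNReal.toReal_one] at h
  have hsplit : ∑ k' ∈ (Finset.range K).erase k, ((P n) (A n k')).toReal =
      (∑ k' ∈ Finset.range K, ((P n) (A n k')).toReal) - ((P n) (A n k)).toReal := by
    have := Finset.add_sum_erase (Finset.range K) (fun k' => ((P n) (A n k')).toReal) hkK
    linarith
  have hlowB : ((P n) (A n k)).toReal ≤ ((P n) B).toReal :=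
    htoReal_le n _ _ (hsubB n k hn2)
  rw [Real.dist_eq, abs_lt]
  constructor
  · linarith
  · linarith
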